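/- Let W(ξ) = Σ_{|k|=λ₀} a_k B_k e^{ik·ξ} be a Beltrami wave as above with a_{-k} = conj(a_k). Then (2π)^{-3} ∫_{𝕋³} W ⊗ W dξ = (1/2) Σ_{|k|=λ₀} |a_k|² (Id − (k/|k|) ⊗ (k/|k|)). -/

import Mathlib

open MeasureTheory Real

lemma oneDim (m : ℤ) : ∫ x in Set.Icc (0:ℝ) (2*π), Complex.exp (Complex.I * (m*x)) =
    if m = 0 then ((2*π:ℝ):ℂ) else 0 := by
  rw [MeasureTheory.integral_Icc_eq_integral_Ioc,
    ← intervalIntegral.integral_of_le (by positivity : (0:ℝ) ≤ 2*π)]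
  by_cases hm : m = 0
  · simp [hm, Complex.ofReal_mul]
  · rw [if_neg hm]
    have : ∀ x : ℝ, Complex.I * (m*x) = (Complex.I * m) * x := by intro x; ring
    simp_rw [this]
    rw [integral_exp_mul_complex (by simp [Complex.I_ne_zero, hm])]
    have h1 : Complex.I * (m:ℂ) * ((2*π:ℝ):ℂ) = (m:ℤ) * (2*π*Complex.I) := by
      push_cast; ring
    rw [h1, Complex.exp_int_mul_two_pi_mul_I]
    simp

lemma threeDim (m : Fin 3 → ℤ) :
    ∫ x in Set.Icc (fun _ => (0:ℝ)) (fun _ => 2*π),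
      Complex.exp (Complex.I * ((∑ j, (m j : ℝ) * x j : ℝ) : ℂ)) =
    if m = 0 then (((2*π)^3 : ℝ) : ℂ) else 0 := by
  have hsplit : ∀ x : Fin 3 → ℝ, Complex.exp (Complex.I * ((∑ j, (m j : ℝ) * x j : ℝ) : ℂ))
      = ∏ j, Complex.exp (Complex.I * ((m j : ℂ) * (x j : ℂ))) := by
    intro x
    rw [← Complex.exp_sum, ← Finset.mul_sum]
    push_cast
    ring_nf
  simp_rw [hsplit]
  rw [← Set.pi_univ_Icc, ← MeasureTheory.integral_indicator (MeasurableSet.univ_pi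
    (fun _ => measurableSet_Icc))]
  have hind : ∀ x : Fin 3 → ℝ,
      (Set.pi Set.univ (fun _ => Set.Icc (0:ℝ) (2*π))).indicator
        (fun x => ∏ j, Complex.exp (Complex.I * ((m j : ℂ) * (x j : ℂ)))) x
      = ∏ j, (Set.Icc (0:ℝ) (2*π)).indicator
          (fun t => Complex.exp (Complex.I * ((m j : ℂ) * (t : ℂ)))) (x j) := by
    intro x
    by_cases hx : x ∈ Set.pi Set.univ (fun _ => Set.Icc (0:ℝ) (2*π))
    · rw [Set.indicator_of_mem hx]
      refine Finset.prod_congr rfl fun j _ => ?_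
      rw [Set.indicator_of_mem (hx j (Set.mem_univ j))]
    · rw [Set.indicator_of_notMem hx]
      rw [Set.mem_pi] at hx
      push_neg at hx
      obtain ⟨j, _, hj⟩ := hx
      exact (Finset.prod_eq_zero (Finset.mem_univ j)
        (by rw [Set.indicator_of_notMem hj])).symm
  simp_rw [hind]
  rw [MeasureTheory.volume_pi, MeasureTheory.integral_fintype_prod_eq_prod
    (f := fun j t => (Set.Icc (0:ℝ) (2*π)).indicator
      (fun t => Complex.exp (Complex.I * ((m j : ℂ) * (t : ℂ)))) t)]
  have : ∀ j, (∫ t : ℝ, (Set.Icc (0:ℝ) (2*π)).indicator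
      (fun t => Complex.exp (Complex.I * ((m j : ℂ) * (t : ℂ)))) t)
      = if m j = 0 then ((2*π:ℝ):ℂ) else 0 := by
    intro j
    rw [MeasureTheory.integral_indicator measurableSet_Icc]
    exact oneDim (m j)
  simp_rw [this]
  by_cases hm : m = 0
  · rw [if_pos hm]
    simp only [hm, Pi.zero_apply, if_pos rfl, Finset.prod_const, Finset.card_univ,
      Fintype.card_fin]
    push_cast; ring
  · rw [if_neg hm]
    have : ∃ j, m j ≠ 0 := by
      by_contra h; push_neg at h; exact hm (funext h)
    obtain ⟨j, hj⟩ := this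
    exact Finset.prod_eq_zero (Finset.mem_univ j) (by rw [if_neg hj])
lemma realKey (lam : ℝ) (hl : lam ≠ 0) (k : Fin 3 → ℤ) (A : Fin 3 → ℝ)
    (hk : ∑ i, ((k i:ℝ))^2 = lam^2) (hA : ∑ i, A i * (k i:ℝ) = 0)
    (hAn : ∑ i, (A i)^2 = 1/2) (i j : Fin 3) :
    2 * (A i * A j + crossProduct (fun t => (k t:ℝ)/lam) A i *
        crossProduct (fun t => (k t:ℝ)/lam) A j)
      = (if i = j then 1 else 0) - (k i:ℝ)*(k j:ℝ)/lam^2 := by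
  simp only [Fin.sum_univ_three] at hk hA hAn
  fin_cases i <;> fin_cases j <;>
    simp only [cross_apply, Matrix.cons_val_zero, Matrix.cons_val_one, Matrix.head_cons,
      Matrix.cons_val_two, Matrix.tail_cons, Fin.isValue, if_true, if_false, Fin.mk_one, Fin.reduceEq, reduceIte,
      show ((⟨2,by norm_num⟩ : Fin 3) = 2) from rfl, show ((⟨0,by norm_num⟩ : Fin 3) = 0) from rfl,
      show ((⟨1,by norm_num⟩ : Fin 3) = 1) from rfl] <;>
    field_simp
  · linear_combination (-2*(A 0^2) + 1)*hk + (2*(((k 1):ℝ)^2+((k 2):ℝ)^2))*hAn +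
      (2*(((k 0):ℝ)*A 0-((k 1):ℝ)*A 1-((k 2):ℝ)*A 2))*hA
  · linear_combination (-2*(A 0*A 1))*hk + (-2*(((k 0):ℝ)*((k 1):ℝ)))*hAn +
      (2*(((k 0):ℝ)*A 1+((k 1):ℝ)*A 0))*hA
  · linear_combination (-2*(A 0*A 2))*hk + (-2*(((k 0):ℝ)*((k 2):ℝ)))*hAn +
      (2*(((k 0):ℝ)*A 2+((k 2):ℝ)*A 0))*hA
  · linear_combination (-2*(A 1*A 0))*hk + (-2*(((k 1):ℝ)*((k 0):ℝ)))*hAn +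
      (2*(((k 1):ℝ)*A 0+((k 0):ℝ)*A 1))*hA
  · linear_combination (-2*(A 1^2) + 1)*hk + (2*(((k 0):ℝ)^2+((k 2):ℝ)^2))*hAn +
      (2*(((k 1):ℝ)*A 1-((k 0):ℝ)*A 0-((k 2):ℝ)*A 2))*hA
  · linear_combination (-2*(A 1*A 2))*hk + (-2*(((k 1):ℝ)*((k 2):ℝ)))*hAn +
      (2*(((k 1):ℝ)*A 2+((k 2):ℝ)*A 1))*hA
  · linear_combination (-2*(A 2*A 0))*hk + (-2*(((k 2):ℝ)*((k 0):ℝ)))*hAn +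
      (2*(((k 2):ℝ)*A 0+((k 0):ℝ)*A 2))*hA
  · linear_combination (-2*(A 2*A 1))*hk + (-2*(((k 2):ℝ)*((k 1):ℝ)))*hAn +
      (2*(((k 2):ℝ)*A 1+((k 1):ℝ)*A 2))*hA
  · linear_combination (-2*(A 2^2) + 1)*hk + (2*(((k 0):ℝ)^2+((k 1):ℝ)^2))*hAn +
      (2*(((k 2):ℝ)*A 2-((k 0):ℝ)*A 0-((k 1):ℝ)*A 1))*hA
lemma zzbar (p q r s : ℝ) :
    ((p:ℂ) + Complex.I*q) * ((r:ℂ) - Complex.I*s)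
      + ((p:ℂ) - Complex.I*q) * ((r:ℂ) + Complex.I*s) = ((2*(p*r+q*s):ℝ):ℂ) := by
  push_cast
  linear_combination (-2*((q:ℂ)*s))*Complex.I_sq

/-- `(2π)^{-3} ∫_{𝕋³} W ⊗ W dξ = (1/2) Σ_{|k|=λ₀} |a_k|² (Id − (k/|k|) ⊗ (k/|k|))`
for a Beltrami wave `W(ξ) = Σ_{|k|=λ₀} a_k B_k e^{ik·ξ}` with `a_{-k} = conj a_k`. -/
theorem stmt3 (lam0 : ℝ) (hlam : 1 ≤ lam0)
    (S : Finset (Fin 3 → ℤ))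
    (hS : ∀ k : Fin 3 → ℤ, k ∈ S ↔ Real.sqrt (∑ i, ((k i : ℝ)) ^ 2) = lam0)
    (A : (Fin 3 → ℤ) → Fin 3 → ℝ)
    (hAk : ∀ k ∈ S, ∑ i, A k i * (k i : ℝ) = 0)
    (hAnorm : ∀ k ∈ S, Real.sqrt (∑ i, (A k i) ^ 2) = 1 / Real.sqrt 2)
    (hAsymm : ∀ k ∈ S, A (-k) = A k)
    (B : (Fin 3 → ℤ) → Fin 3 → ℂ)
    (hB : ∀ k, B k = fun i => ((A k i : ℂ) +
      Complex.I * ((crossProduct (fun j => (k j : ℝ) / lam0) (A k)) i : ℝ)))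
    (a : (Fin 3 → ℤ) → ℂ) (ha : ∀ k, a (-k) = starRingEnd ℂ (a k))
    (W : (Fin 3 → ℝ) → Fin 3 → ℂ)
    (hW : ∀ x i, W x i = ∑ k ∈ S, a k * B k i *
      Complex.exp (Complex.I * ((∑ j, (k j : ℝ) * x j : ℝ) : ℂ))) :
    ∀ i j, ((1 / (2 * π) ^ 3 : ℝ) : ℂ) *
        (∫ x in Set.Icc (fun _ => (0 : ℝ)) (fun _ => 2 * π), W x i * W x j) =
      (1 / 2 : ℂ) * ∑ k ∈ S, (Complex.normSq (a k) : ℂ) *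
        ((if i = j then (1 : ℂ) else 0) -
          (((k i : ℝ) * (k j : ℝ) / lam0 ^ 2 : ℝ) : ℂ)) := by
  intro i j
  have hl0 : lam0 ≠ 0 := by linarith
  -- basic facts
  have hk2 : ∀ k ∈ S, (∑ t, ((k t : ℝ))^2) = lam0^2 := by
    intro k hk
    have h := (hS k).1 hk
    have hnn : (0:ℝ) ≤ ∑ t, ((k t : ℝ))^2 := Finset.sum_nonneg fun t _ => sq_nonneg _
    rw [← h, Real.sq_sqrt hnn]
  have hAn2 : ∀ k ∈ S, (∑ t, (A k t)^2) = 1/2 := by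
    intro k hk
    have h := hAnorm k hk
    have hnn : (0:ℝ) ≤ ∑ t, (A k t)^2 := Finset.sum_nonneg fun t _ => sq_nonneg _
    have := congrArg (fun t => t^2) h
    simp only [div_pow, one_pow, Real.sq_sqrt hnn, Real.sq_sqrt (by norm_num : (0:ℝ) ≤ 2)] at this
    exact this
  have hnegS : ∀ k ∈ S, -k ∈ S := by
    intro k hk
    rw [hS]
    rw [show (∑ t, (((-k) t : ℝ))^2) = ∑ t, ((k t : ℝ))^2 by
      apply Finset.sum_congr rfl; intro t _; simp [neg_sq]]
    exact (hS k).1 hk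
  -- B at -k
  have hBneg : ∀ k ∈ S, ∀ t, B (-k) t = (A k t : ℂ) -
      Complex.I * ((crossProduct (fun s => (k s : ℝ) / lam0) (A k)) t : ℝ) := by
    intro k hk t
    rw [hB]
    simp only [hAsymm k hk]
    have hneg : (fun s => ((-k) s : ℝ) / lam0) = -(fun s => (k s : ℝ) / lam0) := by
      funext s; simp [neg_div]
    rw [hneg, map_neg]
    simp only [LinearMap.neg_apply, Pi.neg_apply]
    push_cast
    ring
  -- continuity
  have hcont : ∀ (m : Fin 3 → ℤ), Continuous fun x : Fin 3 → ℝ =>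
      Complex.exp (Complex.I * ((∑ t, (m t : ℝ) * x t : ℝ) : ℂ)) := by
    intro m
    apply Complex.continuous_exp.comp
    apply continuous_const.mul
    apply Complex.continuous_ofReal.comp
    exact continuous_finset_sum _ fun t _ => continuous_const.mul (continuous_apply t)
  -- the integral
  set D := Set.Icc (fun _ => (0 : ℝ)) (fun _ => 2 * π) with hD
  have hWW : ∀ x : Fin 3 → ℝ, W x i * W x j = ∑ k ∈ S, ∑ l ∈ S,
      (a k * B k i * (a l * B l j)) *
        Complex.exp (Complex.I * ((∑ t, ((k + l) t : ℝ) * x t : ℝ) : ℂ)) := by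
    intro x
    rw [hW x i, hW x j, Finset.sum_mul_sum]
    refine Finset.sum_congr rfl fun k hk => Finset.sum_congr rfl fun l hl => ?_
    have : Complex.I * ((∑ t, (k t : ℝ) * x t : ℝ) : ℂ) +
        Complex.I * ((∑ t, (l t : ℝ) * x t : ℝ) : ℂ) =
        Complex.I * ((∑ t, ((k + l) t : ℝ) * x t : ℝ) : ℂ) := by
      rw [← mul_add, ← Complex.ofReal_add, ← Finset.sum_add_distrib]
      have hs : (∑ t, ((k t : ℝ) * x t + (l t : ℝ) * x t)) = ∑ t, ((k + l) t : ℝ) * x t := by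
        refine Finset.sum_congr rfl fun t _ => ?_
        simp only [Pi.add_apply]
        push_cast
        ring
      rw [hs]
    rw [← this, Complex.exp_add]
    ring
  have hint : (∫ x in D, W x i * W x j) =
      ∑ k ∈ S, ∑ l ∈ S, (a k * B k i * (a l * B l j)) *
        (if k + l = 0 then (((2*π)^3 : ℝ) : ℂ) else 0) := by
    simp_rw [hWW]
    rw [MeasureTheory.integral_finset_sum]
    · refine Finset.sum_congr rfl fun k hk => ?_
      rw [MeasureTheory.integral_finset_sum]
      · refine Finset.sum_congr rfl fun l hl => ?_
        rw [MeasureTheory.integral_const_mul, threeDim (k + l)]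
      · intro l hl
        exact ((continuous_const.mul (hcont (k+l))).integrableOn_Icc)
    · intro k hk
      exact MeasureTheory.integrable_finset_sum _ fun l hl =>
        ((continuous_const.mul (hcont (k+l))).integrableOn_Icc)
  have hint2 : (∫ x in D, W x i * W x j) =
      (((2*π)^3 : ℝ) : ℂ) * ∑ k ∈ S, (a k * B k i * (a (-k) * B (-k) j)) := by
    rw [hint, Finset.mul_sum]
    refine Finset.sum_congr rfl fun k hk => ?_
    have hcond : ∀ l : Fin 3 → ℤ, (k + l = 0) = (l = -k) := by
      intro l
      apply propext
      constructor
      · intro h; exact eq_neg_of_add_eq_zero_right h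
      · intro h; rw [h]; ring
    simp_rw [hcond, mul_ite, mul_zero]
    rw [Finset.sum_ite_eq' S (-k)]
    rw [if_pos (hnegS k hk)]
    ring
  rw [hint2]
  have hpi3 : ((1 / (2 * π) ^ 3 : ℝ) : ℂ) * (((2*π)^3 : ℝ) : ℂ) = 1 := by
    have h1 : (1/(2*π)^3 : ℝ) * ((2*π)^3) = 1 := by
      have : (2*π)^3 ≠ 0 := by positivity
      field_simp
    rw [← Complex.ofReal_mul, h1, Complex.ofReal_one]
  rw [← mul_assoc, hpi3, one_mul, Finset.mul_sum]
  -- now the sum identity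
  set F : (Fin 3 → ℤ) → ℂ := fun k => a k * B k i * (a (-k) * B (-k) j) with hF
  set G : (Fin 3 → ℤ) → ℂ := fun k => (1/2 : ℂ) * ((Complex.normSq (a k) : ℂ) *
      ((if i = j then (1 : ℂ) else 0) - (((k i : ℝ) * (k j : ℝ) / lam0 ^ 2 : ℝ) : ℂ))) with hG
  show ∑ k ∈ S, F k = ∑ k ∈ S, G k
  have hrev : ∀ (H : (Fin 3 → ℤ) → ℂ), ∑ k ∈ S, H (-k) = ∑ k ∈ S, H k := by
    intro H
    apply Finset.sum_nbij' (fun k => -k) (fun k => -k)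
    · intro k hk; exact hnegS k hk
    · intro k hk; exact hnegS k hk
    · intro k _; simp
    · intro k _; simp
    · intro k _; rfl
  have hkey : ∀ k ∈ S, F k + F (-k) = G k + G (-k) := by
    intro k hk
    have hmk : -k ∈ S := hnegS k hk
    have haa : a (-k) * a k = (Complex.normSq (a k) : ℂ) := by
      rw [ha k, mul_comm, Complex.mul_conj]
    have haa' : Complex.normSq (a (-k)) = Complex.normSq (a k) := by
      rw [ha k, Complex.normSq_conj]
    -- F k + F (-k)
    have hFF : F k + F (-k) = (Complex.normSq (a k) : ℂ) *
        (B k i * B (-k) j + B (-k) i * B k j) := by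
      simp only [hF, neg_neg]
      rw [← haa]
      ring
    set C : Fin 3 → ℝ := crossProduct (fun s => (k s : ℝ) / lam0) (A k) with hC
    have hzz : B k i * B (-k) j + B (-k) i * B k j =
        ((2 * (A k i * A k j + C i * C j) : ℝ) : ℂ) := by
      rw [hB k, hBneg k hk i, hBneg k hk j]
      simp only [← hC]
      exact zzbar (A k i) (C i) (A k j) (C j)
    have hreal : 2 * (A k i * A k j + C i * C j) =
        (if i = j then (1:ℝ) else 0) - (k i : ℝ) * (k j : ℝ) / lam0^2 :=
      realKey lam0 hl0 k (A k) (hk2 k hk) (hAk k hk) (hAn2 k hk) i j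
    have hGval : G k + G (-k) = (Complex.normSq (a k) : ℂ) *
        (((if i = j then (1:ℝ) else 0) - (k i : ℝ) * (k j : ℝ) / lam0^2 : ℝ) : ℂ) := by
      simp only [hG, haa']
      have hkk : (((-k) i : ℝ) * ((-k) j : ℝ) / lam0 ^ 2 : ℝ) =
          ((k i : ℝ) * (k j : ℝ) / lam0 ^ 2 : ℝ) := by
        simp only [Pi.neg_apply, Int.cast_neg, neg_mul_neg]
      rw [hkk, Complex.ofReal_sub]
      by_cases hij : i = j <;> simp [hij] <;> push_cast <;> ring
    rw [hFF, hzz, hreal, hGval]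
  have h2 : (2:ℂ) * ∑ k ∈ S, F k = (2:ℂ) * ∑ k ∈ S, G k := by
    calc (2:ℂ) * ∑ k ∈ S, F k = ∑ k ∈ S, F k + ∑ k ∈ S, F (-k) := by
          rw [hrev F]; ring
      _ = ∑ k ∈ S, (F k + F (-k)) := by rw [Finset.sum_add_distrib]
      _ = ∑ k ∈ S, (G k + G (-k)) := Finset.sum_congr rfl hkey
      _ = ∑ k ∈ S, G k + ∑ k ∈ S, G (-k) := by rw [Finset.sum_add_distrib]
      _ = (2:ℂ) * ∑ k ∈ S, G k := by rw [hrev G]; ring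
  exact mul_left_cancel₀ two_ne_zero h2
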